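/- Let (Ω, F, P) and (I, 𝓘, λ) be probability spaces, let W be a σ-algebra on Ω × I containing the product σ-algebra F ⊗ 𝓘, and let Q be a probability measure on (Ω × I, W) that is a Fubini extension of (Ω × I, F ⊗ 𝓘, P ⊗ λ): for every Q-integrable real-valued f on Ω × I, the section f^u(·) = f(·,u) is P-integrable for λ-a.e. u, the section f_ω(·) = f(ω,·) is λ-integrable for P-a.e. ω, the functions u ↦ ∫_Ω f^u dP and ω ↦ ∫_I f_ω dλ are integrable, and ∫_{Ω×I} f dQ = ∫_I (∫_Ω f^u dP) dλ = ∫_Ω (∫_I f_ω dλ) dP. Let X : Ω × I → ℝ be W-measurable and square-integrable with respect to Q. Then the following are equivalent: (1) X is essentially pairwise uncorrelated, i.e. for λ-a.e. u ∈ I the random variable X^u is square-integrable under P, and for λ-a.e. u and λ-a.e. v the random variables X^u, X^v are uncorrelated (E[X^u X^v] = E[X^u] E[X^v]); (2) for every A ∈ 𝓘 with λ(A) > 0, one has ∫_A X^u(ω) λ(du) = ∫_A E[X^u] λ(du) for P-a.e. ω ∈ Ω. -/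

import Mathlib

open MeasureTheory

noncomputable section

/-- `(Ω × I, W, Q)` is a Fubini extension of the product probability space
`(Ω × I, F ⊗ 𝓘, P ⊗ λ)`: `W` contains the product σ-algebra, and every `Q`-integrable
real-valued function has `λ`-a.e. `P`-integrable sections and `P`-a.e. `λ`-integrable
sections, the iterated integrals being integrable and both equal to the `Q`-integral. -/
def IsFubiniExtension {Ω I : Type*} (mΩ : MeasurableSpace Ω) (mI : MeasurableSpace I)
    (P : @Measure Ω mΩ) (lam : @Measure I mI)
    (W : MeasurableSpace (Ω × I)) (Q : @Measure (Ω × I) W) : Prop :=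
  mΩ.prod mI ≤ W ∧
  ∀ f : Ω × I → ℝ, Integrable f Q →
    (∀ᵐ u ∂lam, Integrable (fun ω => f (ω, u)) P) ∧
    (∀ᵐ ω ∂P, Integrable (fun u => f (ω, u)) lam) ∧
    Integrable (fun u => ∫ ω, f (ω, u) ∂P) lam ∧
    Integrable (fun ω => ∫ u, f (ω, u) ∂lam) P ∧
    (∫ p, f p ∂Q = ∫ u, (∫ ω, f (ω, u) ∂P) ∂lam) ∧
    (∫ p, f p ∂Q = ∫ ω, (∫ u, f (ω, u) ∂lam) ∂P)

namespace ELLNAux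

/-- Two functions in `L²` have integrable product. -/
lemma integrable_mul_of_memL2 {α : Type*} [MeasurableSpace α] {μ : Measure α}
    {f g : α → ℝ} (hf : MemLp f 2 μ) (hg : MemLp g 2 μ) :
    Integrable (fun x => f x * g x) μ := by
  have h : MemLp (f • g) 1 μ := hg.smul hf
  rw [← memLp_one_iff_integrable]
  exact h

variable {Ω I : Type*} [mΩ : MeasurableSpace Ω] [mI : MeasurableSpace I]

/-- The first marginal of a Fubini extension measure is `P`. -/
lemma measurePreserving_fst
    (P : Measure Ω) [IsProbabilityMeasure P] (lam : Measure I) [IsProbabilityMeasure lam]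
    (W : MeasurableSpace (Ω × I)) (Q : @Measure (Ω × I) W) [IsProbabilityMeasure Q]
    (hFub : IsFubiniExtension mΩ mI P lam W Q) :
    @MeasurePreserving _ _ W mΩ Prod.fst Q P := by
  have hm : @Measurable _ _ W mΩ Prod.fst := Measurable.mono measurable_fst hFub.1 le_rfl
  refine ⟨hm, ?_⟩
  ext s hs
  rw [Measure.map_apply hm hs]
  have hind : Integrable (fun p : Ω × I => (Prod.fst ⁻¹' s).indicator (fun _ => (1:ℝ)) p) Q :=
    (integrable_const (1:ℝ)).indicator (hm hs)
  obtain ⟨-, -, -, -, h5, -⟩ := hFub.2 _ hind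
  have e1 : ∫ p, (Prod.fst ⁻¹' s).indicator (fun _ => (1:ℝ)) p ∂Q
      = (Q (Prod.fst ⁻¹' s)).toReal := by
    rw [integral_indicator_const (1:ℝ) (hm hs)]; simp [measureReal_def]
  have e2 : ∀ u : I, (fun ω => (Prod.fst ⁻¹' s).indicator (fun _ => (1:ℝ)) (ω, u))
      = s.indicator (fun _ => (1:ℝ)) := by
    intro u; funext ω; by_cases hω : ω ∈ s <;> simp [Set.indicator_apply, hω]
  have e3 : ∫ u, (∫ ω, (Prod.fst ⁻¹' s).indicator (fun _ => (1:ℝ)) (ω, u) ∂P) ∂lam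
      = (P s).toReal := by
    simp only [e2]
    rw [integral_indicator_const (1:ℝ) hs]
    simp [measureReal_def]
  rw [e1, e3] at h5
  exact (ENNReal.toReal_eq_toReal_iff' (measure_ne_top _ _) (measure_ne_top _ _)).mp h5

/-- Key computation: both iterated integrals of
`(ω, u) ↦ 1_B(u) φ(ω) X(ω, u)` agree. -/
lemma key
    (P : Measure Ω) [IsProbabilityMeasure P] (lam : Measure I) [IsProbabilityMeasure lam]
    (W : MeasurableSpace (Ω × I)) (Q : @Measure (Ω × I) W) [IsProbabilityMeasure Q]
    (hFub : IsFubiniExtension mΩ mI P lam W Q)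
    (X : Ω × I → ℝ) (hX2 : MemLp X 2 Q)
    (φ : Ω → ℝ) (hφ : MemLp φ 2 P) (B : Set I) (hB : MeasurableSet B) :
    ∫ u in B, (∫ ω, φ ω * X (ω, u) ∂P) ∂lam
      = ∫ ω, φ ω * (∫ u in B, X (ω, u) ∂lam) ∂P := by
  have hsndm : @Measurable _ _ W mI Prod.snd := Measurable.mono measurable_snd hFub.1 le_rfl
  have hφQ : MemLp (fun p : Ω × I => φ p.1) 2 Q :=
    hφ.comp_measurePreserving (measurePreserving_fst P lam W Q hFub)
  have hmul : Integrable (fun p : Ω × I => φ p.1 * X p) Q := integrable_mul_of_memL2 hφQ hX2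
  have hGint : Integrable ((Prod.snd ⁻¹' B).indicator (fun p : Ω × I => φ p.1 * X p)) Q :=
    hmul.indicator (hsndm hB)
  obtain ⟨-, -, -, -, h5, h6⟩ := hFub.2 _ hGint
  have e1 : (fun u => ∫ ω, (Prod.snd ⁻¹' B).indicator (fun p : Ω × I => φ p.1 * X p) (ω, u) ∂P)
      = B.indicator (fun u => ∫ ω, φ ω * X (ω, u) ∂P) := by
    funext u
    by_cases hu : u ∈ B <;>
      simp [Set.indicator_apply, Set.mem_preimage, hu]
  have e2 : (fun ω => ∫ u, (Prod.snd ⁻¹' B).indicator (fun p : Ω × I => φ p.1 * X p) (ω, u) ∂lam)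
      = fun ω => φ ω * ∫ u in B, X (ω, u) ∂lam := by
    funext ω
    have h : (fun u => (Prod.snd ⁻¹' B).indicator (fun p : Ω × I => φ p.1 * X p) (ω, u))
        = B.indicator (fun u => φ ω * X (ω, u)) := by
      funext u; by_cases hu : u ∈ B <;> simp [Set.indicator_apply, Set.mem_preimage, hu]
    rw [h, integral_indicator hB, integral_const_mul]
  rw [e1, integral_indicator hB] at h5
  rw [e2] at h6
  exact h5.symm.trans h6

/-- The partial set-average `ω ↦ ∫_B X(ω, ·) dλ` is in `L²(P)`. -/
lemma memL2_setIntegral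
    (P : Measure Ω) [IsProbabilityMeasure P] (lam : Measure I) [IsProbabilityMeasure lam]
    (W : MeasurableSpace (Ω × I)) (Q : @Measure (Ω × I) W) [IsProbabilityMeasure Q]
    (hFub : IsFubiniExtension mΩ mI P lam W Q)
    (X : Ω × I → ℝ) (hX2 : MemLp X 2 Q) (B : Set I) (hB : MeasurableSet B) :
    MemLp (fun ω => ∫ u in B, X (ω, u) ∂lam) 2 P := by
  have hsndm : @Measurable _ _ W mI Prod.snd := Measurable.mono measurable_snd hFub.1 le_rfl
  have hXint : Integrable X Q := hX2.integrable one_le_two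
  have hXX : Integrable (fun p : Ω × I => X p * X p) Q := integrable_mul_of_memL2 hX2 hX2
  have hind : Integrable ((Prod.snd ⁻¹' B).indicator X) Q := hXint.indicator (hsndm hB)
  obtain ⟨-, -, -, h4, -, -⟩ := hFub.2 _ hind
  have e : (fun ω => ∫ u, (Prod.snd ⁻¹' B).indicator X (ω, u) ∂lam)
      = fun ω => ∫ u in B, X (ω, u) ∂lam := by
    funext ω
    have h : (fun u => (Prod.snd ⁻¹' B).indicator X (ω, u)) = B.indicator (fun u => X (ω, u)) := by
      funext u; by_cases hu : u ∈ B <;> simp [Set.indicator_apply, Set.mem_preimage, hu]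
    rw [h, integral_indicator hB]
  rw [e] at h4
  obtain ⟨-, hsecω1, -, -, -, -⟩ := hFub.2 X hXint
  obtain ⟨-, hsecω2, -, hs4, -, -⟩ := hFub.2 _ hXX
  have hbound : ∀ᵐ ω ∂P, ‖(∫ u in B, X (ω, u) ∂lam) ^ 2‖
      ≤ ∫ u, X (ω, u) * X (ω, u) ∂lam := by
    filter_upwards [hsecω1, hsecω2] with ω h1 h2
    have h2' : Integrable (fun u => X (ω, u) ^ 2) lam := by
      simpa [pow_two] using h2
    have hgm : AEStronglyMeasurable (B.indicator fun u => X (ω, u)) lam :=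
      h1.aestronglyMeasurable.indicator hB
    have hgsqeq : (fun u => (B.indicator fun u' => X (ω, u')) u ^ 2)
        = B.indicator (fun u => X (ω, u) ^ 2) := by
      funext u; by_cases hu : u ∈ B <;> simp [Set.indicator_apply, hu]
    have hgsq : Integrable (fun u => (B.indicator fun u' => X (ω, u')) u ^ 2) lam := by
      rw [hgsqeq]; exact h2'.indicator hB
    have hgL2 : MemLp (B.indicator fun u => X (ω, u)) 2 lam :=
      (memLp_two_iff_integrable_sq hgm).mpr hgsq
    have hvar := ProbabilityTheory.variance_nonneg (B.indicator fun u => X (ω, u)) lam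
    rw [ProbabilityTheory.variance_eq_sub hgL2] at hvar
    simp only [Pi.pow_apply] at hvar
    have hIg : ∫ u, (B.indicator fun u' => X (ω, u')) u ∂lam = ∫ u in B, X (ω, u) ∂lam :=
      integral_indicator hB
    have hIgsq : ∫ u, (B.indicator fun u' => X (ω, u')) u ^ 2 ∂lam
        = ∫ u in B, X (ω, u) ^ 2 ∂lam := by
      rw [hgsqeq]; exact integral_indicator hB
    have hle2 : ∫ u in B, X (ω, u) ^ 2 ∂lam ≤ ∫ u, X (ω, u) * X (ω, u) ∂lam := by
      calc ∫ u in B, X (ω, u) ^ 2 ∂lam ≤ ∫ u, X (ω, u) ^ 2 ∂lam :=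
            setIntegral_le_integral h2' (Filter.Eventually.of_forall fun u => sq_nonneg _)
        _ = ∫ u, X (ω, u) * X (ω, u) ∂lam := by simp [pow_two]
    have hkey : (∫ u in B, X (ω, u) ∂lam) ^ 2 ≤ ∫ u, X (ω, u) * X (ω, u) ∂lam := by
      rw [hIg, hIgsq] at hvar
      linarith [hvar, hle2]
    calc ‖(∫ u in B, X (ω, u) ∂lam) ^ 2‖ = (∫ u in B, X (ω, u) ∂lam) ^ 2 := by
          rw [Real.norm_eq_abs, abs_of_nonneg (sq_nonneg _)]
      _ ≤ ∫ u, X (ω, u) * X (ω, u) ∂lam := hkey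
  have hsqint : Integrable (fun ω => (∫ u in B, X (ω, u) ∂lam) ^ 2) P := by
    refine Integrable.mono' hs4 ?_ hbound
    exact (h4.aestronglyMeasurable.mul h4.aestronglyMeasurable).congr
      (Filter.Eventually.of_forall fun ω => (pow_two _).symm)
  exact (memLp_two_iff_integrable_sq h4.aestronglyMeasurable).mpr hsqint

end ELLNAux

open ELLNAux in
/-- exact law of large numbers. Let `(Ω × I, W, Q)` be a Fubini
extension of `(Ω × I, F ⊗ 𝓘, P ⊗ λ)` and let `X : Ω × I → ℝ` be `W`-measurable and
square-integrable w.r.t. `Q`. Then `X` is essentially pairwise uncorrelated iff for every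
`A ∈ 𝓘` with `λ(A) > 0`, `∫_A X^u(ω) λ(du) = ∫_A E[X^u] λ(du)` for `P`-a.e. `ω`. -/
theorem exact_law_of_large_numbers
    {Ω I : Type*} [mΩ : MeasurableSpace Ω] [mI : MeasurableSpace I]
    (P : Measure Ω) [IsProbabilityMeasure P]
    (lam : Measure I) [IsProbabilityMeasure lam]
    (W : MeasurableSpace (Ω × I)) (Q : @Measure (Ω × I) W) [IsProbabilityMeasure Q]
    (hFub : IsFubiniExtension mΩ mI P lam W Q)
    (X : Ω × I → ℝ) (hXmeas : @Measurable (Ω × I) ℝ W _ X)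
    (hX2 : MemLp X 2 Q) :
    ((∀ᵐ u ∂lam, MemLp (fun ω => X (ω, u)) 2 P) ∧
      (∀ᵐ u ∂lam, ∀ᵐ v ∂lam,
        ∫ ω, X (ω, u) * X (ω, v) ∂P
          = (∫ ω, X (ω, u) ∂P) * (∫ ω, X (ω, v) ∂P)))
    ↔
    (∀ A : Set I, MeasurableSet A → 0 < lam A →
      ∀ᵐ ω ∂P,
        ∫ u in A, X (ω, u) ∂lam = ∫ u in A, (∫ ω', X (ω', u) ∂P) ∂lam) := by
  have hXint : Integrable X Q := hX2.integrable one_le_two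
  have hXX : Integrable (fun p : Ω × I => X p * X p) Q := integrable_mul_of_memL2 hX2 hX2
  obtain ⟨hu1, -, hψint, -, -, -⟩ := hFub.2 X hXint
  obtain ⟨hu2, -, -, -, -, -⟩ := hFub.2 _ hXX
  have hMem : ∀ᵐ u ∂lam, MemLp (fun ω => X (ω, u)) 2 P := by
    filter_upwards [hu1, hu2] with u h1 h2
    refine (memLp_two_iff_integrable_sq h1.aestronglyMeasurable).mpr ?_
    simpa [pow_two] using h2
  constructor
  · rintro ⟨-, h2⟩ A hA -
    set c : ℝ := ∫ u in A, (∫ ω', X (ω', u) ∂P) ∂lam with hcdef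
    have hhA2 : MemLp (fun ω => ∫ u in A, X (ω, u) ∂lam) 2 P :=
      memL2_setIntegral P lam W Q hFub X hX2 A hA
    have K1 := key P lam W Q hFub X hX2 (fun _ => (1:ℝ)) (memLp_const 1) A hA
    simp only [one_mul] at K1
    have hEh : ∫ ω, (∫ u in A, X (ω, u) ∂lam) ∂P = c := by
      rw [hcdef]; exact K1.symm
    have K2 : ∫ u in A, (∫ ω, (∫ u' in A, X (ω, u') ∂lam) * X (ω, u) ∂P) ∂lam
        = ∫ ω, (∫ u' in A, X (ω, u') ∂lam) * (∫ u' in A, X (ω, u') ∂lam) ∂P :=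
      key P lam W Q hFub X hX2 (fun ω => ∫ u' in A, X (ω, u') ∂lam) hhA2 A hA
    have hae : ∀ᵐ u ∂lam, ∫ ω, (∫ u' in A, X (ω, u') ∂lam) * X (ω, u) ∂P
        = (∫ ω, X (ω, u) ∂P) * c := by
      filter_upwards [hMem, h2] with u hu h2u
      have Ku : ∫ v in A, (∫ ω, X (ω, u) * X (ω, v) ∂P) ∂lam
          = ∫ ω, X (ω, u) * (∫ v in A, X (ω, v) ∂lam) ∂P :=
        key P lam W Q hFub X hX2 (fun ω => X (ω, u)) hu A hA
      have e : ∫ v in A, (∫ ω, X (ω, u) * X (ω, v) ∂P) ∂lam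
          = (∫ ω, X (ω, u) ∂P) * c := by
        rw [integral_congr_ae (ae_restrict_of_ae h2u), integral_const_mul, hcdef]
      have e2 : ∫ ω, (∫ u' in A, X (ω, u') ∂lam) * X (ω, u) ∂P
          = ∫ ω, X (ω, u) * (∫ v in A, X (ω, v) ∂lam) ∂P :=
        integral_congr_ae (Filter.Eventually.of_forall fun ω => mul_comm _ _)
      rw [e2, ← Ku, e]
    have hsetA : ∫ u in A, (∫ ω, (∫ u' in A, X (ω, u') ∂lam) * X (ω, u) ∂P) ∂lam = c * c := by
      rw [integral_congr_ae (ae_restrict_of_ae hae), integral_mul_const, hcdef]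
    have hEh2 : ∫ ω, (∫ u' in A, X (ω, u') ∂lam) * (∫ u' in A, X (ω, u') ∂lam) ∂P = c * c :=
      K2.symm.trans hsetA
    have hint1 : Integrable (fun ω => ∫ u in A, X (ω, u) ∂lam) P := hhA2.integrable one_le_two
    have hintmul : Integrable
        (fun ω => (∫ u in A, X (ω, u) ∂lam) * (∫ u in A, X (ω, u) ∂lam)) P :=
      integrable_mul_of_memL2 hhA2 hhA2
    have hexp : (fun ω => ((∫ u in A, X (ω, u) ∂lam) - c) ^ 2)
        = fun ω => ((∫ u in A, X (ω, u) ∂lam) * (∫ u in A, X (ω, u) ∂lam)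
            - (2 * c) * (∫ u in A, X (ω, u) ∂lam)) + c ^ 2 := by
      funext ω; ring
    have hintsq : Integrable (fun ω => ((∫ u in A, X (ω, u) ∂lam) - c) ^ 2) P := by
      rw [hexp]; exact (hintmul.sub (hint1.const_mul _)).add (integrable_const _)
    have hI1 : Integrable (fun ω => (∫ u in A, X (ω, u) ∂lam) * (∫ u in A, X (ω, u) ∂lam)
        - (2 * c) * (∫ u in A, X (ω, u) ∂lam)) P := hintmul.sub (hint1.const_mul _)
    have hzero : ∫ ω, ((∫ u in A, X (ω, u) ∂lam) - c) ^ 2 ∂P = 0 := by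
      rw [hexp, integral_add hI1 (integrable_const _),
        integral_sub hintmul (hint1.const_mul _), integral_const_mul, hEh, hEh2,
        integral_const]
      simp only [probReal_univ, one_smul]
      ring
    have hae0 := (integral_eq_zero_iff_of_nonneg (fun ω => sq_nonneg _) hintsq).mp hzero
    filter_upwards [hae0] with ω hω
    have hω' : ((∫ u in A, X (ω, u) ∂lam) - c) ^ 2 = 0 := by simpa using hω
    have : (∫ u in A, X (ω, u) ∂lam) - c = 0 := by
      exact pow_eq_zero_iff (two_ne_zero) |>.mp hω'
    have hfin : ∫ u in A, X (ω, u) ∂lam = c := by linarith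
    rw [hcdef] at hfin
    exact hfin
  · intro hyp
    refine ⟨hMem, ?_⟩
    have hcst : ∀ B : Set I, MeasurableSet B →
        ∀ᵐ ω ∂P, ∫ u in B, X (ω, u) ∂lam = ∫ u in B, (∫ ω', X (ω', u) ∂P) ∂lam := by
      intro B hB
      rcases eq_or_ne (lam B) 0 with h0 | h0
      · have hz : lam.restrict B = 0 := Measure.restrict_eq_zero.mpr h0
        simp [hz]
      · exact hyp B hB (lt_of_le_of_ne zero_le (Ne.symm h0))
    filter_upwards [hMem] with u hu
    have hXuQ : MemLp (fun p : Ω × I => X (p.1, u)) 2 Q :=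
      hu.comp_measurePreserving (measurePreserving_fst P lam W Q hFub)
    have hFint : Integrable (fun p : Ω × I => X (p.1, u) * X p) Q :=
      integrable_mul_of_memL2 hXuQ hX2
    obtain ⟨-, -, h3, -, -, -⟩ := hFub.2 _ hFint
    have hkint : Integrable (fun v => ∫ ω, X (ω, u) * X (ω, v) ∂P) lam := h3
    have hgint : Integrable (fun v => (∫ ω, X (ω, u) ∂P) * (∫ ω', X (ω', v) ∂P)) lam :=
      hψint.const_mul _
    have heq : ∀ s : Set I, MeasurableSet s → lam s < ⊤ →
        ∫ v in s, (∫ ω, X (ω, u) * X (ω, v) ∂P) ∂lam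
          = ∫ v in s, (∫ ω, X (ω, u) ∂P) * (∫ ω', X (ω', v) ∂P) ∂lam := by
      intro s hs _
      have Ks : ∫ v in s, (∫ ω, X (ω, u) * X (ω, v) ∂P) ∂lam
          = ∫ ω, X (ω, u) * (∫ v in s, X (ω, v) ∂lam) ∂P :=
        key P lam W Q hFub X hX2 (fun ω => X (ω, u)) hu s hs
      rw [Ks]
      have hrw : (fun ω => X (ω, u) * (∫ v in s, X (ω, v) ∂lam))
          =ᵐ[P] fun ω => X (ω, u) * (∫ v in s, (∫ ω', X (ω', v) ∂P) ∂lam) :=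
        (hcst s hs).mono fun ω hω => by simp only [hω]
      rw [integral_congr_ae hrw, integral_mul_const, integral_const_mul]
    exact Integrable.ae_eq_of_forall_setIntegral_eq _ _ hkint hgint heq
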